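/- arXiv:0910.3740 — 4 statements merged into one kernel-verified Lean document; each statement's English description precedes it below -/
import Mathlib

section
/- Let ρ be a density matrix and ε > 0. There exists a unit vector ψ such that the trace norm ‖ρ − |ψ⟩⟨ψ|‖₁ ≤ ε if and only if ‖ρ‖∞ ≥ 1 − ε/2. -/
open Matrix BigOperators
open scoped ComplexOrder

/-- The largest eigenvalue of a Hermitian matrix (0 if not Hermitian). -/
noncomputable def specMax {n : Type*} [Fintype n] [DecidableEq n]
    (M : Matrix n n ℂ) : ℝ :=
  if h : M.IsHermitian then ⨆ i, h.eigenvalues i else 0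

/-- The trace norm: the sum of the singular values. -/
noncomputable def traceNorm {m n : Type*} [Fintype m] [Fintype n] [DecidableEq n]
    (X : Matrix m n ℂ) : ℝ :=
  ∑ i, Real.sqrt ((Matrix.posSemidef_conjTranspose_mul_self X).1.eigenvalues i)

section Helpers

variable {n : Type*} [Fintype n] [DecidableEq n]

open scoped MatrixOrder

lemma conj_mul_self_eq (z : ℂ) : (starRingEnd ℂ) z * z = (‖z‖ : ℂ) ^ 2 := by
  rw [mul_comm, Complex.mul_conj']

/-- trace of the psd square root. -/
lemma trace_sqrt_eq {M : Matrix n n ℂ} (hM : M.PosSemidef) :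
    (CFC.sqrt M).trace = ↑(∑ i, Real.sqrt (hM.1.eigenvalues i)) := by
  rw [CFC.sqrt_eq_cfc, cfc_nnreal_eq_real _ M hM.nonneg, hM.1.cfc_eq, IsHermitian.cfc,
    Unitary.conjStarAlgAut_apply, Matrix.trace_mul_cycle, Unitary.coe_star_mul_self,
    Matrix.one_mul, trace_diagonal]
  push_cast
  simp [Real.coe_sqrt, Real.coe_toNNReal', hM.eigenvalues_nonneg]

/-- conjugation product formula -/
lemma conj_diag_mul (U : Matrix n n ℂ) (hU : star U * U = 1) (f g : n → ℂ) :
    (U * diagonal f * star U) * (U * diagonal g * star U)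
      = U * diagonal (fun i => f i * g i) * star U := by
  have h1 : star U * (U * (diagonal g * star U)) = diagonal g * star U := by
    rw [← Matrix.mul_assoc, hU, Matrix.one_mul]
  calc (U * diagonal f * star U) * (U * diagonal g * star U)
      = U * (diagonal f * (star U * (U * (diagonal g * star U)))) := by
        simp only [Matrix.mul_assoc]
    _ = U * (diagonal f * (diagonal g * star U)) := by rw [h1]
    _ = U * (diagonal (fun i => f i * g i) * star U) := by
        rw [← Matrix.mul_assoc (diagonal f), diagonal_mul_diagonal]
    _ = U * diagonal (fun i => f i * g i) * star U := by simp only [Matrix.mul_assoc]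

/-- The trace norm of a hermitian matrix presented as `U D U*`. -/
lemma traceNorm_conj_diag (U : Matrix n n ℂ) (hU : star U * U = 1) (d : n → ℝ) :
    traceNorm (U * diagonal (RCLike.ofReal ∘ d) * star U) = ∑ i, |d i| := by
  set A : Matrix n n ℂ := U * diagonal (RCLike.ofReal ∘ d) * star U with hAdef
  have hstar : star (RCLike.ofReal ∘ d : n → ℂ) = RCLike.ofReal ∘ d := by
    funext i
    simp [Function.comp_apply, RCLike.star_def, RCLike.conj_ofReal]
  have hAherm : Aᴴ = A := by
    rw [hAdef, show star U = Uᴴ from rfl]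
    simp only [conjTranspose_mul, conjTranspose_conjTranspose, diagonal_conjTranspose, hstar,
      Matrix.mul_assoc]
  set B : Matrix n n ℂ := U * diagonal (RCLike.ofReal ∘ fun i => |d i|) * star U with hBdef
  have hB : B.PosSemidef := by
    rw [hBdef, show star U = Uᴴ from rfl]
    exact Matrix.PosSemidef.mul_mul_conjTranspose_same
      (Matrix.posSemidef_diagonal_iff.mpr (fun i => by
        exact RCLike.ofReal_nonneg.mpr (abs_nonneg (d i)))) U
  have hsq : B ^ 2 = Aᴴ * A := by
    rw [hAherm, sq, hAdef, hBdef, conj_diag_mul U hU, conj_diag_mul U hU]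
    have heq : (fun i => (RCLike.ofReal ∘ fun i => |d i|) i * (RCLike.ofReal ∘ fun i => |d i|) i)
        = (fun i => (RCLike.ofReal ∘ d) i * (RCLike.ofReal ∘ d) i : n → ℂ) := by
      funext i
      simp only [Function.comp_apply]
      exact_mod_cast abs_mul_abs_self (d i)
    rw [heq]
  have hBsqrt : B = CFC.sqrt (Aᴴ * A) :=
    ((CFC.sqrt_eq_iff _ _ (Matrix.posSemidef_conjTranspose_mul_self A).nonneg hB.nonneg).mpr
      (by rw [← sq]; exact hsq)).symm
  have h1 : ((traceNorm A : ℝ) : ℂ) = (CFC.sqrt (Aᴴ * A)).trace := by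
    rw [trace_sqrt_eq (Matrix.posSemidef_conjTranspose_mul_self A)]
    rfl
  have h2 : B.trace = ((∑ i, |d i| : ℝ) : ℂ) := by
    rw [hBdef, Matrix.trace_mul_cycle, hU, Matrix.one_mul, trace_diagonal]
    push_cast
    rfl
  have : ((traceNorm A : ℝ) : ℂ) = ((∑ i, |d i| : ℝ) : ℂ) := by
    rw [h1, ← hBsqrt, h2]
  exact_mod_cast this

/-- The trace norm of a hermitian matrix is the sum of absolute values of eigenvalues. -/
lemma traceNorm_eq_sum_abs {A : Matrix n n ℂ} (hA : A.IsHermitian) :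
    traceNorm A = ∑ i, |hA.eigenvalues i| := by
  conv_lhs => rw [hA.spectral_theorem, Unitary.conjStarAlgAut_apply]
  exact traceNorm_conj_diag _ (Unitary.coe_star_mul_self _) _

/-- Trace of a hermitian matrix as sum of eigenvalues. -/
lemma trace_eq_sum_eigenvalues {A : Matrix n n ℂ} (hA : A.IsHermitian) :
    A.trace = ((∑ i, hA.eigenvalues i : ℝ) : ℂ) := by
  conv_lhs => rw [hA.spectral_theorem, Unitary.conjStarAlgAut_apply]
  rw [Matrix.trace_mul_cycle, Unitary.coe_star_mul_self, Matrix.one_mul, trace_diagonal]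
  push_cast
  rfl

/-- The quadratic form of a hermitian matrix at a unit vector is a convex combination of
eigenvalues. -/
lemma quad_form_eq {A : Matrix n n ℂ} (hA : A.IsHermitian) (ψ : n → ℂ)
    (hψ : ∑ i, ‖ψ i‖ ^ 2 = 1) :
    ∃ w : n → ℝ, (∀ i, 0 ≤ w i) ∧ (∑ i, w i) = 1 ∧
      star ψ ⬝ᵥ (A *ᵥ ψ) = ((∑ i, hA.eigenvalues i * w i : ℝ) : ℂ) := by
  set U : Matrix n n ℂ := (hA.eigenvectorUnitary : Matrix n n ℂ) with hUdef
  have hU : star U * U = 1 := Unitary.coe_star_mul_self _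
  have hU' : U * star U = 1 := (Matrix.mem_unitaryGroup_iff).mp hA.eigenvectorUnitary.2
  set c : n → ℂ := star U *ᵥ ψ with hcdef
  have hstarc : star ψ ᵥ* U = star c := by
    rw [hcdef, star_mulVec, show (star U)ᴴ = U from conjTranspose_conjTranspose U]
  refine ⟨fun i => ‖c i‖ ^ 2, fun i => by positivity, ?_, ?_⟩
  · have key : ((∑ i, ‖c i‖ ^ 2 : ℝ) : ℂ) = ((1 : ℝ) : ℂ) := by
      have e1 : star c ⬝ᵥ c = ((∑ i, ‖c i‖ ^ 2 : ℝ) : ℂ) := by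
        simp only [dotProduct, Pi.star_apply, RCLike.star_def]
        push_cast
        exact Finset.sum_congr rfl fun i _ => conj_mul_self_eq (c i)
      have e2 : star c ⬝ᵥ c = ((1 : ℝ) : ℂ) := by
        rw [hcdef]
        nth_rewrite 1 [show star (star U *ᵥ ψ) = star ψ ᵥ* U from hstarc.symm]
        rw [← dotProduct_mulVec, mulVec_mulVec, hU', one_mulVec]
        simp only [dotProduct, Pi.star_apply, RCLike.star_def]
        rw [show ((1:ℝ):ℂ) = ((∑ i, ‖ψ i‖^2 : ℝ) : ℂ) by rw [hψ]]
        push_cast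
        exact Finset.sum_congr rfl fun i _ => conj_mul_self_eq (ψ i)
      rw [← e1, e2]
    exact_mod_cast key
  · conv_lhs => rw [hA.spectral_theorem, Unitary.conjStarAlgAut_apply]
    rw [← hUdef, ← Matrix.mulVec_mulVec, ← Matrix.mulVec_mulVec, dotProduct_mulVec, hstarc,
      ← hcdef]
    simp only [dotProduct, mulVec_diagonal, Pi.star_apply, RCLike.star_def, Function.comp_apply]
    push_cast
    refine Finset.sum_congr rfl fun i _ => ?_
    rw [← conj_mul_self_eq (c i)]
    simp only [show (RCLike.ofReal : ℝ → ℂ) = Complex.ofReal from rfl]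
    ring

lemma sum_weighted_le_ciSup [Nonempty n] (lam w : n → ℝ) (hw0 : ∀ i, 0 ≤ w i)
    (hw1 : ∑ i, w i = 1) : ∑ i, lam i * w i ≤ ⨆ i, lam i := by
  have hbdd : BddAbove (Set.range lam) := Set.Finite.bddAbove (Set.finite_range lam)
  calc ∑ i, lam i * w i ≤ ∑ i, (⨆ j, lam j) * w i := by
        refine Finset.sum_le_sum fun i _ => mul_le_mul_of_nonneg_right (le_ciSup hbdd i) (hw0 i)
    _ = (⨆ j, lam j) * ∑ i, w i := by rw [Finset.mul_sum]
    _ = ⨆ j, lam j := by rw [hw1, mul_one]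

lemma sum_weighted_ge (lam w : n → ℝ) (hw0 : ∀ i, 0 ≤ w i)
    (hw1 : ∑ i, w i = 1) :
    (∑ i, lam i - ∑ i, |lam i|) / 2 ≤ ∑ i, lam i * w i := by
  have hwle : ∀ i, w i ≤ 1 := by
    intro i
    calc w i ≤ ∑ j, w j := Finset.single_le_sum (fun j _ => hw0 j) (Finset.mem_univ i)
      _ = 1 := hw1
  calc (∑ i, lam i - ∑ i, |lam i|) / 2 = ∑ i, (lam i - |lam i|) / 2 := by
        rw [← Finset.sum_sub_distrib, ← Finset.sum_div]
    _ ≤ ∑ i, lam i * w i := by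
        refine Finset.sum_le_sum fun i _ => ?_
        rcases le_or_gt 0 (lam i) with h | h
        · rw [abs_of_nonneg h]
          simpa using mul_nonneg h (hw0 i)
        · rw [abs_of_neg h]
          have : (lam i - -lam i) / 2 = lam i := by ring
          rw [this]
          calc lam i = lam i * 1 := (mul_one _).symm
            _ ≤ lam i * w i := by
              exact mul_le_mul_of_nonpos_left (hwle i) h.le

lemma vecMulVec_isHermitian (ψ : n → ℂ) : (Matrix.vecMulVec ψ (star ψ)).IsHermitian := by
  ext i j
  simp [Matrix.conjTranspose_apply, Matrix.vecMulVec_apply, mul_comm]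

lemma vecMulVec_trace (ψ : n → ℂ) :
    (Matrix.vecMulVec ψ (star ψ)).trace = ((∑ i, ‖ψ i‖ ^ 2 : ℝ) : ℂ) := by
  simp only [Matrix.trace, Matrix.diag, Matrix.vecMulVec_apply, Pi.star_apply, RCLike.star_def]
  push_cast
  exact Finset.sum_congr rfl fun i _ => by rw [mul_comm]; exact conj_mul_self_eq (ψ i)

lemma vecMulVec_mulVec_self (ψ : n → ℂ) (hψ : ∑ i, ‖ψ i‖ ^ 2 = 1) :
    Matrix.vecMulVec ψ (star ψ) *ᵥ ψ = ψ := by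
  funext i
  simp only [Matrix.mulVec, dotProduct, Matrix.vecMulVec_apply, Pi.star_apply, RCLike.star_def]
  have : ∑ j, ψ i * ((starRingEnd ℂ) (ψ j)) * ψ j = ψ i * ∑ j, ((starRingEnd ℂ) (ψ j)) * ψ j := by
    rw [Finset.mul_sum]; exact Finset.sum_congr rfl fun j _ => by ring
  rw [this, show ∑ j, ((starRingEnd ℂ) (ψ j)) * ψ j = ((∑ j, ‖ψ j‖^2 : ℝ) : ℂ) by
    push_cast; exact Finset.sum_congr rfl fun j _ => conj_mul_self_eq (ψ j), hψ]
  simp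

end Helpers

/-- There is a unit vector ψ with ‖ρ − |ψ⟩⟨ψ|‖₁ ≤ ε iff ‖ρ‖∞ ≥ 1 − ε/2. -/
theorem exists_pure_close_iff_specMax_large {n : Type*} [Fintype n] [DecidableEq n] [Nonempty n]
    (ρ : Matrix n n ℂ) (hρ : ρ.PosSemidef) (htr : ρ.trace = 1) (ε : ℝ) (hε : 0 < ε) :
    (∃ ψ : n → ℂ, (∑ i, ‖ψ i‖ ^ 2 = 1) ∧
        traceNorm (ρ - Matrix.vecMulVec ψ (star ψ)) ≤ ε) ↔
      specMax ρ ≥ 1 - ε / 2 := by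
  have hspec : specMax ρ = ⨆ i, hρ.1.eigenvalues i := by
    rw [specMax, dif_pos hρ.1]
  have hsumρ : ∑ i, hρ.1.eigenvalues i = 1 := by
    have := trace_eq_sum_eigenvalues hρ.1
    rw [htr] at this
    exact_mod_cast this.symm
  constructor
  · rintro ⟨ψ, hψ, hclose⟩
    set P := Matrix.vecMulVec ψ (star ψ) with hPdef
    have hPh : P.IsHermitian := vecMulVec_isHermitian ψ
    have hAh : (ρ - P).IsHermitian := hρ.1.sub hPh
    -- trace of ρ - P is 0
    have htrA : ∑ i, hAh.eigenvalues i = 0 := by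
      have h1 : (ρ - P).trace = 0 := by
        rw [Matrix.trace_sub, htr, hPdef, vecMulVec_trace, hψ]
        simp
      have h2 := trace_eq_sum_eigenvalues hAh
      rw [h1] at h2
      exact_mod_cast h2.symm
    have htnA : ∑ i, |hAh.eigenvalues i| ≤ ε := by
      rw [← traceNorm_eq_sum_abs hAh]
      exact hclose
    -- quadratic forms
    obtain ⟨w, hw0, hw1, hwq⟩ := quad_form_eq hρ.1 ψ hψ
    obtain ⟨w', hw0', hw1', hwq'⟩ := quad_form_eq hAh ψ hψ
    have hsplit : star ψ ⬝ᵥ ((ρ - P) *ᵥ ψ) = star ψ ⬝ᵥ (ρ *ᵥ ψ) - ((1:ℝ):ℂ) := by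
      rw [Matrix.sub_mulVec, dotProduct_sub, hPdef, vecMulVec_mulVec_self ψ hψ]
      congr 1
      simp only [dotProduct, Pi.star_apply, RCLike.star_def]
      rw [show ((1:ℝ):ℂ) = ((∑ i, ‖ψ i‖^2 : ℝ) : ℂ) by rw [hψ]]
      push_cast
      exact Finset.sum_congr rfl fun i _ => conj_mul_self_eq (ψ i)
    have hreal : ∑ i, hAh.eigenvalues i * w' i = ∑ i, hρ.1.eigenvalues i * w i - 1 := by
      have hC : ((∑ i, hAh.eigenvalues i * w' i : ℝ) : ℂ)
          = ((∑ i, hρ.1.eigenvalues i * w i : ℝ) : ℂ) - ((1:ℝ):ℂ) := by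
        rw [← hwq', hsplit, ← hwq]
      have hC' : ((∑ i, hAh.eigenvalues i * w' i : ℝ) : ℂ)
          = ((∑ i, hρ.1.eigenvalues i * w i - 1 : ℝ) : ℂ) := by
        rw [hC]; push_cast; ring
      exact_mod_cast hC'
    have h1 : ∑ i, hρ.1.eigenvalues i * w i ≤ ⨆ i, hρ.1.eigenvalues i :=
      sum_weighted_le_ciSup _ _ hw0 hw1
    have h2 := sum_weighted_ge hAh.eigenvalues w' hw0' hw1'
    rw [htrA] at h2
    rw [ge_iff_le, hspec]
    linarith
  · intro hs
    rw [hspec] at hs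
    obtain ⟨i₀, hi₀⟩ := exists_eq_ciSup_of_finite (f := hρ.1.eigenvalues)
    set lam := hρ.1.eigenvalues with hlam
    set U : Matrix n n ℂ := (hρ.1.eigenvectorUnitary : Matrix n n ℂ) with hUdef
    have hU : star U * U = 1 := Unitary.coe_star_mul_self _
    set ψ : n → ℂ := fun j => U j i₀ with hψdef
    have hcol : ∑ j, ‖ψ j‖ ^ 2 = 1 := by
      have h1 : (star U * U) i₀ i₀ = 1 := by rw [hU]; simp
      have h2 : (star U * U) i₀ i₀ = ((∑ j, ‖ψ j‖ ^ 2 : ℝ) : ℂ) := by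
        simp only [Matrix.mul_apply, Matrix.star_apply, RCLike.star_def]
        push_cast
        exact Finset.sum_congr rfl fun j _ => conj_mul_self_eq (ψ j)
      have h3 : ((∑ j, ‖ψ j‖ ^ 2 : ℝ) : ℂ) = ((1:ℝ):ℂ) := by
        rw [← h2, h1]
        norm_num
      exact_mod_cast h3
    refine ⟨ψ, hcol, ?_⟩
    -- the projector equals U * diagonal(indicator) * U*
    set e : n → ℝ := fun i => if i = i₀ then 1 else 0 with hedef
    have hP : Matrix.vecMulVec ψ (star ψ) = U * diagonal (RCLike.ofReal ∘ e) * star U := by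
      ext j k
      simp only [Matrix.vecMulVec_apply, Pi.star_apply, RCLike.star_def, Matrix.mul_apply,
        Matrix.mul_diagonal, Matrix.diagonal_apply, Matrix.star_apply, Function.comp_apply, hedef]
      rw [Finset.sum_eq_single i₀ (fun b _ hb => by simp [hb])
        (fun h => absurd (Finset.mem_univ i₀) h)]
      simp [hψdef]
      try ring
    have hdecomp : ρ - Matrix.vecMulVec ψ (star ψ)
        = U * diagonal (RCLike.ofReal ∘ fun i => lam i - e i) * star U := by
      conv_lhs => rw [hρ.1.spectral_theorem, Unitary.conjStarAlgAut_apply, hP]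
      rw [← Matrix.sub_mul, ← Matrix.mul_sub, diagonal_sub, hlam]
      have heq2 : (fun i => (RCLike.ofReal ∘ hρ.1.eigenvalues) i - (RCLike.ofReal ∘ e) i)
          = (RCLike.ofReal ∘ fun i => hρ.1.eigenvalues i - e i : n → ℂ) := by
        funext i
        simp [Function.comp_apply]
      rw [heq2]
    rw [hdecomp, traceNorm_conj_diag U hU]
    -- now evaluate the sum
    have hnn : ∀ i, 0 ≤ lam i := hρ.eigenvalues_nonneg
    have hle1 : lam i₀ ≤ 1 := by
      have : ∑ i ∈ Finset.univ.erase i₀, lam i ≥ 0 :=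
        Finset.sum_nonneg fun i _ => hnn i
      have hsum' : lam i₀ + ∑ i ∈ Finset.univ.erase i₀, lam i = 1 := by
        rw [Finset.add_sum_erase _ _ (Finset.mem_univ i₀)]
        exact hsumρ
      linarith
    have hsum' : lam i₀ + ∑ i ∈ Finset.univ.erase i₀, lam i = 1 := by
      rw [Finset.add_sum_erase _ _ (Finset.mem_univ i₀)]
      exact hsumρ
    have hsplit : ∑ i, |lam i - e i|
        = |lam i₀ - 1| + ∑ i ∈ Finset.univ.erase i₀, |lam i - e i| := by
      rw [← Finset.add_sum_erase _ _ (Finset.mem_univ i₀)]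
      simp [hedef]
    rw [hsplit, abs_of_nonpos (by linarith)]
    have herase : ∑ i ∈ Finset.univ.erase i₀, |lam i - e i|
        = ∑ i ∈ Finset.univ.erase i₀, lam i := by
      refine Finset.sum_congr rfl fun i hi => ?_
      have hi' : i ≠ i₀ := Finset.ne_of_mem_erase hi
      simp [hedef, hi', abs_of_nonneg (hnn i)]
    rw [herase]
    have : lam i₀ ≥ 1 - ε / 2 := by rw [hi₀]; exact hs
    linarith
end

section
/- If Φ is a quantum channel from H to K such that Φ ⊗ id_H is rank non-increasing (i.e., rank((Φ ⊗ id_H)(ρ)) ≤ rank(ρ) for all density matrices ρ on H ⊗ H), then there exists a single Kraus operator A with A*A = I_H such that Φ(ρ) = AρA* for all ρ. -/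
open Matrix BigOperators
open scoped ComplexOrder

/-- The map Φ ⊗ id acting on block matrices: apply Φ to the first tensor factor. -/
def tensorMapId {m k n : Type*}
    (Φ : Matrix m m ℂ → Matrix k k ℂ)
    (M : Matrix (m × n) (m × n) ℂ) : Matrix (k × n) (k × n) ℂ :=
  Matrix.of fun p q => Φ (Matrix.of fun a b => M (a, p.2) (b, q.2)) p.1 q.1

/-- Complete positivity of a map on matrices. -/
def IsCompletelyPositive {m k : Type*} [Fintype m] [Fintype k]
    (Φ : Matrix m m ℂ → Matrix k k ℂ) : Prop :=
  ∀ (n : ℕ) (M : Matrix (m × Fin n) (m × Fin n) ℂ),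
    M.PosSemidef → (tensorMapId Φ M).PosSemidef

/-- A positive semidefinite matrix of rank at most one is of the form `v vᴴ`. -/
lemma psd_rank_le_one {n : Type*} [Fintype n] [DecidableEq n] {M : Matrix n n ℂ}
    (hM : M.PosSemidef) (h : M.rank ≤ 1) :
    ∃ v : n → ℂ, ∀ i j, M i j = v i * star (v j) := by
  have hH : M.IsHermitian := hM.1
  by_cases h0 : ∀ i, hH.eigenvalues i = 0
  · refine ⟨0, fun i j => ?_⟩
    have hMz : M = 0 := by
      have hdiag : Matrix.diagonal (RCLike.ofReal ∘ hH.eigenvalues : n → ℂ) = 0 := by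
        ext a b
        by_cases hab : a = b <;> simp [Matrix.diagonal_apply, hab, h0]
      conv_lhs => rw [hH.spectral_theorem]
      rw [hdiag]
      simp
    simp [hMz]
  · push_neg at h0
    obtain ⟨i0, hi0⟩ := h0
    have huniq : ∀ j, j ≠ i0 → hH.eigenvalues j = 0 := by
      intro j hj
      by_contra hje
      have h2 : 2 ≤ Fintype.card {i // hH.eigenvalues i ≠ 0} := by
        have hne : (⟨j, hje⟩ : {i // hH.eigenvalues i ≠ 0}) ≠ ⟨i0, hi0⟩ := by
          simpa using hj
        have hnt : Nontrivial {i // hH.eigenvalues i ≠ 0} := ⟨⟨⟨j, hje⟩, ⟨i0, hi0⟩, hne⟩⟩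
        have := Fintype.one_lt_card_iff_nontrivial.mpr hnt
        omega
      have hr := hH.rank_eq_card_non_zero_eigs
      omega
    set U : Matrix n n ℂ := (hH.eigenvectorUnitary : Matrix n n ℂ) with hU
    have hspec : ∀ i j, M i j = (hH.eigenvalues i0 : ℂ) * (U i i0 * star (U j i0)) := by
      intro i j
      conv_lhs => rw [hH.spectral_theorem, Unitary.conjStarAlgAut_apply]
      rw [← hU]
      rw [Matrix.mul_apply]
      rw [Finset.sum_eq_single i0]
      · rw [Matrix.mul_apply, Finset.sum_eq_single i0]
        · simp [Matrix.diagonal_apply, Matrix.star_apply]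
          ring
        · intro b _ hb
          simp [Matrix.diagonal_apply, hb, huniq b hb]
        · intro hb; exact absurd (Finset.mem_univ i0) hb
      · intro b _ hb
        rw [Matrix.mul_apply, Finset.sum_eq_single b]
        · simp [Matrix.diagonal_apply, huniq b hb]
        · intro c _ hc
          simp [Matrix.diagonal_apply, hc]
        · intro hb'; exact absurd (Finset.mem_univ b) hb'
      · intro hb; exact absurd (Finset.mem_univ i0) hb
    have hnn : 0 ≤ hH.eigenvalues i0 := hM.eigenvalues_nonneg i0
    refine ⟨fun i => (Real.sqrt (hH.eigenvalues i0) : ℂ) * U i i0, fun i j => ?_⟩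
    rw [hspec i j]
    rw [star_mul']
    have hstar : star ((Real.sqrt (hH.eigenvalues i0) : ℝ) : ℂ)
        = ((Real.sqrt (hH.eigenvalues i0) : ℝ) : ℂ) := by
      simp [Complex.star_def, Complex.conj_ofReal]
    rw [hstar]
    have hsq : ((Real.sqrt (hH.eigenvalues i0) : ℝ) : ℂ)
        * ((Real.sqrt (hH.eigenvalues i0) : ℝ) : ℂ) = (hH.eigenvalues i0 : ℂ) := by
      rw [← Complex.ofReal_mul, Real.mul_self_sqrt hnn]
    calc (hH.eigenvalues i0 : ℂ) * (U i i0 * star (U j i0))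
        = (((Real.sqrt (hH.eigenvalues i0) : ℝ) : ℂ) * ((Real.sqrt (hH.eigenvalues i0) : ℝ) : ℂ))
          * (U i i0 * star (U j i0)) := by rw [hsq]
      _ = ((Real.sqrt (hH.eigenvalues i0) : ℝ) : ℂ) * U i i0
          * (((Real.sqrt (hH.eigenvalues i0) : ℝ) : ℂ) * star (U j i0)) := by ring

/-- If Φ ⊗ id_H is rank non-increasing on density matrices, then Φ is conjugation by a
single Kraus operator A with A*A = I, i.e. Φ is an isometry channel. -/
theorem rank_nonincreasing_implies_isometry {d k : ℕ}
    (Φ : Matrix (Fin d) (Fin d) ℂ →ₗ[ℂ] Matrix (Fin k) (Fin k) ℂ)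
    (hCP : IsCompletelyPositive ⇑Φ)
    (hTP : ∀ X : Matrix (Fin d) (Fin d) ℂ, (Φ X).trace = X.trace)
    (hrank : ∀ M : Matrix (Fin d × Fin d) (Fin d × Fin d) ℂ,
      M.PosSemidef → M.trace = 1 → (tensorMapId ⇑Φ M).rank ≤ M.rank) :
    ∃ A : Matrix (Fin k) (Fin d) ℂ, Aᴴ * A = 1 ∧
      ∀ ρ : Matrix (Fin d) (Fin d) ℂ, Φ ρ = A * ρ * Aᴴ := by
  rcases Nat.eq_zero_or_pos d with hd | hd
  · subst hd
    refine ⟨0, ?_, ?_⟩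
    · ext a b; exact a.elim0
    · intro ρ
      have hρ : ρ = 0 := Subsingleton.elim _ _
      subst hρ
      simp
  have hd0 : (d : ℂ) ≠ 0 := Nat.cast_ne_zero.2 (by omega)
  -- the maximally entangled state
  set s : ℂ := ((Real.sqrt ((d : ℝ)⁻¹) : ℝ) : ℂ) with hs
  set ω : Fin d × Fin d → ℂ := fun p => if p.1 = p.2 then s else 0 with hω
  set Ω : Matrix (Fin d × Fin d) (Fin d × Fin d) ℂ := vecMulVec ω (star ω) with hΩdef
  have hss : s * star s = ((d : ℂ))⁻¹ := by
    rw [hs]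
    rw [show star ((Real.sqrt ((d:ℝ)⁻¹) : ℝ) : ℂ) = ((Real.sqrt ((d:ℝ)⁻¹) : ℝ) : ℂ) by
      simp [Complex.star_def, Complex.conj_ofReal]]
    rw [← Complex.ofReal_mul, Real.mul_self_sqrt (by positivity)]
    simp
  have hΩapply : ∀ p q, Ω p q = ω p * star (ω q) := by
    intro p q; rw [hΩdef, vecMulVec_apply]; rfl
  have hΩpsd : Ω.PosSemidef := by
    rw [hΩdef, vecMulVec_eq Unit, ← conjTranspose_replicateCol]
    exact posSemidef_self_mul_conjTranspose _
  have hΩtr : Ω.trace = 1 := by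
    rw [Matrix.trace]
    have : ∀ p : Fin d × Fin d, Ω.diag p = if p.1 = p.2 then (d : ℂ)⁻¹ else 0 := by
      intro p
      rw [Matrix.diag_apply, hΩapply, hω]
      by_cases h : p.1 = p.2
      · simp only [h, if_pos rfl, if_true]
        exact hss
      · simp [h]
    rw [Finset.sum_congr rfl fun p _ => this p]
    rw [Fintype.sum_prod_type]
    simp [Finset.sum_ite_eq, mul_inv_cancel₀ hd0]
  have hΩrank : Ω.rank ≤ 1 := by
    rw [hΩdef, vecMulVec_eq Unit]
    exact le_trans (rank_mul_le_left _ _)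
      (by simpa using rank_le_card_width (replicateCol Unit ω))
  -- the (normalized) Choi matrix
  set N : Matrix (Fin k × Fin d) (Fin k × Fin d) ℂ := tensorMapId ⇑Φ Ω with hN
  have hNpsd : N.PosSemidef := hCP d Ω hΩpsd
  have hNrank : N.rank ≤ 1 := le_trans (hrank Ω hΩpsd hΩtr) hΩrank
  obtain ⟨v, hv⟩ := psd_rank_le_one hNpsd hNrank
  -- key computation on basis matrices
  have key : ∀ (a b : Fin d) (i j : Fin k),
      Φ (Matrix.single a b 1) i j = (d : ℂ) * (v (i, a) * star (v (j, b))) := by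
    intro a b i j
    have hmat : (Matrix.of fun x y => Ω (x, a) (y, b)) = Matrix.single a b ((d : ℂ)⁻¹) := by
      ext x y
      rw [Matrix.of_apply, hΩapply, hω]
      simp only [Matrix.single, Matrix.of_apply]
      by_cases hx : x = a <;> by_cases hy : y = b
      · simp only [hx, hy, if_pos rfl, and_self, if_true]
        exact hss
      · simp [hx, hy, Ne.symm hy]
      · simp [hx, Ne.symm hx]
      · simp [hx, Ne.symm hx]
    have h1 : N (i, a) (j, b) = Φ (Matrix.single a b ((d : ℂ)⁻¹)) i j := by
      rw [hN]
      show Φ (Matrix.of fun x y => Ω (x, a) (y, b)) i j = _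
      rw [hmat]
    have h2 : Matrix.single a b ((d:ℂ)⁻¹) = (d:ℂ)⁻¹ • Matrix.single a b (1:ℂ) := by
      rw [smul_single]; simp
    have h3 := hv (i, a) (j, b)
    rw [h1, h2, _root_.map_smul] at h3
    have h4 : (d:ℂ)⁻¹ * (Φ (Matrix.single a b 1) i j) = v (i,a) * star (v (j,b)) := by
      simpa using h3
    rw [← h4, ← mul_assoc, mul_inv_cancel₀ hd0, one_mul]
  -- the Kraus operator
  set A : Matrix (Fin k) (Fin d) ℂ :=
    Matrix.of fun i a => ((Real.sqrt d : ℝ) : ℂ) * v (i, a) with hA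
  have hAentry : ∀ (a b : Fin d) (i j : Fin k),
      Φ (Matrix.single a b 1) i j = A i a * star (A j b) := by
    intro a b i j
    rw [key a b i j, hA]
    simp only [Matrix.of_apply, star_mul']
    rw [show star (((Real.sqrt d : ℝ) : ℂ)) = ((Real.sqrt d : ℝ) : ℂ) by
      simp [Complex.star_def, Complex.conj_ofReal]]
    have : ((Real.sqrt d : ℝ) : ℂ) * ((Real.sqrt d : ℝ) : ℂ) = (d : ℂ) := by
      rw [← Complex.ofReal_mul, Real.mul_self_sqrt (by positivity)]
      simp
    calc (d : ℂ) * (v (i, a) * star (v (j, b)))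
        = (((Real.sqrt d : ℝ) : ℂ) * ((Real.sqrt d : ℝ) : ℂ)) * (v (i, a) * star (v (j, b))) := by
          rw [this]
      _ = ((Real.sqrt d : ℝ) : ℂ) * v (i, a) * (((Real.sqrt d : ℝ) : ℂ) * star (v (j, b))) := by
          ring
  refine ⟨A, ?_, ?_⟩
  · ext a b
    have htr := hTP (Matrix.single b a 1)
    rw [Matrix.trace, Matrix.trace] at htr
    have hL : ∑ i, (Φ (Matrix.single b a 1)).diag i = ∑ i, A i b * star (A i a) := by
      refine Finset.sum_congr rfl fun i _ => ?_
      rw [Matrix.diag_apply, hAentry b a i i]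
    have hR : ∑ p, (Matrix.single b a (1:ℂ)).diag p = if a = b then 1 else 0 := by
      simp only [Matrix.diag_apply, Matrix.single, Matrix.of_apply]
      by_cases h : b = a
      · subst h; simp
      · rw [Finset.sum_eq_zero]
        · simp [Ne.symm h]
        · intro p _
          rw [if_neg]
          rintro ⟨rfl, rfl⟩
          exact h rfl
    rw [hL, hR] at htr
    rw [Matrix.mul_apply, Matrix.one_apply]
    rw [← htr]
    refine Finset.sum_congr rfl fun i _ => ?_
    rw [Matrix.conjTranspose_apply]
    ring
  · intro ρ
    have hexp : Φ ρ = ∑ a, ∑ b, ρ a b • Φ (Matrix.single a b 1) := by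
      conv_lhs => rw [matrix_eq_sum_single ρ]
      rw [map_sum]
      refine Finset.sum_congr rfl fun a _ => ?_
      rw [map_sum]
      refine Finset.sum_congr rfl fun b _ => ?_
      have hsb : Matrix.single a b (ρ a b) = ρ a b • Matrix.single a b (1 : ℂ) := by
        rw [smul_single, smul_eq_mul, mul_one]
      rw [hsb, _root_.map_smul]
    ext i j
    rw [hexp]
    simp only [Matrix.sum_apply, Matrix.smul_apply, smul_eq_mul]
    have hcol : ∀ b, (A * ρ) i b * Aᴴ b j = ∑ a, ρ a b * (A i a * star (A j b)) := by
      intro b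
      rw [Matrix.mul_apply, Matrix.conjTranspose_apply, Finset.sum_mul]
      refine Finset.sum_congr rfl fun a _ => ?_
      ring
    have hRHS : (A * ρ * Aᴴ) i j = ∑ a, ∑ b, ρ a b * (A i a * star (A j b)) := by
      rw [Matrix.mul_apply]
      rw [Finset.sum_congr rfl fun b _ => hcol b]
      rw [Finset.sum_comm]
    rw [hRHS]
    exact Finset.sum_congr rfl fun a _ => Finset.sum_congr rfl fun b _ => by
      rw [hAentry a b i j]
end

section
/- Suppose Φ is a quantum channel and ρ = (1/2)Σ_{a,b∈{i,j}} Φ(|a⟩⟨b|) ⊗ |a⟩⟨b| is the output of Φ ⊗ id on the pure state (|ii⟩ + |jj⟩)/√2 with i ≠ j. If tr(ρ²) ≥ 1 − 2ε, then tr(Φ(|i⟩⟨j|)·Φ(|i⟩⟨j|)*) ≥ 1 − 4ε. -/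
open Matrix BigOperators Kronecker
open scoped ComplexOrder

/-- Outer products `v vᴴ` are positive semidefinite. -/
lemma outer_psd {n : Type*} [Fintype n] (v : n → ℂ) :
    (Matrix.of fun a b => v a * star (v b) : Matrix n n ℂ).PosSemidef := by
  constructor
  · ext a b
    simp [Matrix.conjTranspose_apply, mul_comm]
  · intro x
    exact (Matrix.posSemidef_vecMulVec_self_star v).2 x

/-- A completely positive map is positive. -/
lemma psd_map {d k : ℕ} (Φ : Matrix (Fin d) (Fin d) ℂ →ₗ[ℂ] Matrix (Fin k) (Fin k) ℂ)
    (hCP : IsCompletelyPositive ⇑Φ) {M : Matrix (Fin d) (Fin d) ℂ} (hM : M.PosSemidef) :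
    (Φ M).PosSemidef := by
  have h1 : (M.submatrix (Prod.fst : Fin d × Fin 1 → Fin d) Prod.fst).PosSemidef :=
    hM.submatrix _
  have h2 := hCP 1 _ h1
  have h3 : Φ M = (tensorMapId ⇑Φ (M.submatrix Prod.fst Prod.fst)).submatrix
      (fun p : Fin k => (p, (0 : Fin 1))) (fun q : Fin k => (q, (0 : Fin 1))) := rfl
  rw [h3]
  exact h2.submatrix _

lemma vec1_outer {d : ℕ} (i j : Fin d) (hij : i ≠ j) :
    (Matrix.of fun a b => ((if a = i then 1 else 0) + (if a = j then 1 else 0) : ℂ) *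
        star ((if b = i then 1 else 0) + (if b = j then 1 else 0) : ℂ)) =
      Matrix.single i i 1 + Matrix.single i j 1 +
        Matrix.single j i 1 + Matrix.single j j 1 := by
  ext a b
  by_cases hai : a = i <;> by_cases haj : a = j <;> by_cases hbi : b = i <;>
    by_cases hbj : b = j <;>
    simp_all [Matrix.single, Matrix.add_apply, eq_comm, hij]

lemma vec2_outer {d : ℕ} (i j : Fin d) (hij : i ≠ j) :
    (Matrix.of fun a b => ((if a = i then 1 else 0) + (if a = j then Complex.I else 0) : ℂ) *
        star ((if b = i then 1 else 0) + (if b = j then Complex.I else 0) : ℂ)) =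
      Matrix.single i i 1 + Matrix.single i j (-Complex.I) +
        Matrix.single j i Complex.I + Matrix.single j j 1 := by
  ext a b
  by_cases hai : a = i <;> by_cases haj : a = j <;> by_cases hbi : b = i <;>
    by_cases hbj : b = j <;>
    simp_all [Matrix.single, Matrix.add_apply, eq_comm, hij, Complex.star_def,
      Complex.conj_I, Complex.I_mul_I]

lemma std_diag_psd {d : ℕ} (i : Fin d) : (Matrix.single i i (1 : ℂ)).PosSemidef := by
  have h := outer_psd (fun a : Fin d => if a = i then (1 : ℂ) else 0)
  have e : Matrix.single i i (1 : ℂ) =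
      Matrix.of fun a b => (if a = i then (1 : ℂ) else 0) * star (if b = i then (1 : ℂ) else 0) := by
    ext a b
    by_cases hai : a = i <;> by_cases hbi : b = i <;>
      simp_all [Matrix.single, eq_comm]
  rw [e]; exact h

/-- Deduce `B = Aᴴ` from hermiticity of two combinations. -/
lemma adj_of_herm {k : ℕ} (A B P Q : Matrix (Fin k) (Fin k) ℂ)
    (hP : P.IsHermitian) (hQ : Q.IsHermitian)
    (h1 : (P + A + B + Q).IsHermitian)
    (h2 : (P + (-Complex.I) • A + Complex.I • B + Q).IsHermitian) :
    B = Aᴴ := by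
  have hK1 : (A + B).IsHermitian := by
    have : A + B = P + A + B + Q - P - Q := by abel
    rw [this]
    exact (h1.sub hP).sub hQ
  have hK2 : ((-Complex.I) • A + Complex.I • B).IsHermitian := by
    have : (-Complex.I) • A + Complex.I • B = P + (-Complex.I) • A + Complex.I • B + Q - P - Q := by
      abel
    rw [this]
    exact (h2.sub hP).sub hQ
  ext p q
  have e1 := congrFun (congrFun hK1 p) q
  have e2 := congrFun (congrFun hK2 p) q
  simp only [Matrix.conjTranspose_apply, Matrix.add_apply, Matrix.smul_apply, smul_eq_mul,
    star_add, star_mul', star_neg, Complex.star_def, Complex.conj_I, star_star] at e1 e2 ⊢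
  linear_combination (-(1:ℂ)/2) * e1 + (Complex.I/2) * e2 +
    ((B p q - A p q - (starRingEnd ℂ) (A q p) + (starRingEnd ℂ) (B q p))/2) * Complex.I_sq

/-- For a PSD matrix of trace one, the purity is at most one. -/
lemma trace_sq_le_one {n : ℕ} {A : Matrix (Fin n) (Fin n) ℂ} (hA : A.PosSemidef)
    (h1 : A.trace = 1) : ((A * A).trace).re ≤ 1 := by
  have hH := hA.1
  have spec := hH.spectral_theorem
  set U := (hH.eigenvectorUnitary : Matrix (Fin n) (Fin n) ℂ) with hU
  set D : Matrix (Fin n) (Fin n) ℂ := diagonal (RCLike.ofReal ∘ hH.eigenvalues) with hD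
  have hUU : star U * U = 1 := (Matrix.mem_unitaryGroup_iff').mp hH.eigenvectorUnitary.2
  have hAA : (A * A).trace = (D * D).trace := by
    rw [spec]
    calc ((U * D * star U) * (U * D * star U)).trace
        = (U * (D * D) * star U).trace := by
          rw [show (U * D * star U) * (U * D * star U) = U * (D * (star U * U) * D) * star U by
            simp only [Matrix.mul_assoc], hUU]
          simp [Matrix.mul_assoc]
      _ = (star U * (U * (D * D))).trace := by rw [Matrix.trace_mul_comm]
      _ = (D * D).trace := by rw [← Matrix.mul_assoc, hUU, Matrix.one_mul]
  have htr : A.trace = D.trace := by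
    rw [spec]
    calc (U * D * star U).trace = (star U * (U * D)).trace := by
          rw [Matrix.trace_mul_comm]
      _ = D.trace := by rw [← Matrix.mul_assoc, hUU, Matrix.one_mul]
  have hsum : ∑ p, hH.eigenvalues p = 1 := by
    have : ((∑ p, hH.eigenvalues p : ℝ) : ℂ) = 1 := by
      push_cast
      rw [← h1, htr, hD]
      simp [Matrix.trace_diagonal]
    exact_mod_cast this
  have hDD : ((D * D).trace).re = ∑ p, (hH.eigenvalues p) ^ 2 := by
    rw [hD, Matrix.diagonal_mul_diagonal, Matrix.trace_diagonal]
    simp [sq]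
  rw [hAA, hDD]
  have hle := Finset.sum_sq_le_sq_sum_of_nonneg (s := Finset.univ)
    (f := hH.eigenvalues) (fun p _ => hA.eigenvalues_nonneg p)
  calc ∑ p, (hH.eigenvalues p) ^ 2 ≤ (∑ p, hH.eigenvalues p) ^ 2 := hle
    _ = 1 := by rw [hsum]; norm_num

/-- If ρ = (1/2)Σ_{a,b∈{i,j}} Φ(|a⟩⟨b|) ⊗ |a⟩⟨b|, the output of Φ ⊗ id on
(|ii⟩+|jj⟩)/√2, has purity tr(ρ²) ≥ 1 − 2ε, then tr(Φ(|i⟩⟨j|)Φ(|i⟩⟨j|)*) ≥ 1 − 4ε. -/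
theorem cross_term_large_of_high_purity {d k : ℕ}
    (Φ : Matrix (Fin d) (Fin d) ℂ →ₗ[ℂ] Matrix (Fin k) (Fin k) ℂ)
    (hCP : IsCompletelyPositive ⇑Φ)
    (hTP : ∀ X : Matrix (Fin d) (Fin d) ℂ, (Φ X).trace = X.trace)
    (i j : Fin d) (hij : i ≠ j) (ε : ℝ) (hε : 0 ≤ ε)
    (ρ : Matrix (Fin k × Fin d) (Fin k × Fin d) ℂ)
    (hρ : ρ = (1 / 2 : ℂ) •
      (Φ (Matrix.single i i 1) ⊗ₖ Matrix.single i i (1 : ℂ) +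
       Φ (Matrix.single i j 1) ⊗ₖ Matrix.single i j (1 : ℂ) +
       Φ (Matrix.single j i 1) ⊗ₖ Matrix.single j i (1 : ℂ) +
       Φ (Matrix.single j j 1) ⊗ₖ Matrix.single j j (1 : ℂ)))
    (hpurity : ((ρ * ρ).trace).re ≥ 1 - 2 * ε) :
    ((Φ (Matrix.single i j 1) * (Φ (Matrix.single i j 1))ᴴ).trace).re ≥
      1 - 4 * ε := by
  -- positivity on the diagonal basis matrices
  have hPii : (Φ (Matrix.single i i 1)).PosSemidef := psd_map Φ hCP (std_diag_psd i)
  have hPjj : (Φ (Matrix.single j j 1)).PosSemidef := psd_map Φ hCP (std_diag_psd j)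
  -- Φ(E_ji) = Φ(E_ij)ᴴ
  have hM1 : (Φ (Matrix.single i i 1) + Φ (Matrix.single i j 1) +
      Φ (Matrix.single j i 1) + Φ (Matrix.single j j 1)).IsHermitian := by
    have h := (psd_map Φ hCP (vec1_outer i j hij ▸
      outer_psd (fun a : Fin d => (if a = i then 1 else 0) + (if a = j then 1 else 0)))).1
    simpa [map_add] using h
  have hM2 : (Φ (Matrix.single i i 1) + (-Complex.I) • Φ (Matrix.single i j 1) +
      Complex.I • Φ (Matrix.single j i 1) + Φ (Matrix.single j j 1)).IsHermitian := by
    have h := (psd_map Φ hCP (vec2_outer i j hij ▸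
      outer_psd (fun a : Fin d => (if a = i then 1 else 0) + (if a = j then Complex.I else 0)))).1
    have e1 : Matrix.single i j (-Complex.I) =
        (-Complex.I) • Matrix.single i j (1 : ℂ) := by
      rw [Matrix.smul_single, smul_eq_mul, mul_one]
    have e2 : Matrix.single j i Complex.I =
        Complex.I • Matrix.single j i (1 : ℂ) := by
      rw [Matrix.smul_single, smul_eq_mul, mul_one]
    rw [e1, e2] at h
    simpa only [map_add, _root_.map_smul, neg_smul, map_neg] using h
  have hadj : Φ (Matrix.single j i 1) = (Φ (Matrix.single i j 1))ᴴ :=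
    adj_of_herm _ _ _ _ hPii.1 hPjj.1 hM1 hM2
  -- purity expansion
  have hexp : (ρ * ρ).trace = (1/4 : ℂ) *
      ((Φ (Matrix.single i i 1) * Φ (Matrix.single i i 1)).trace +
       (Φ (Matrix.single i j 1) * Φ (Matrix.single j i 1)).trace +
       (Φ (Matrix.single j i 1) * Φ (Matrix.single i j 1)).trace +
       (Φ (Matrix.single j j 1) * Φ (Matrix.single j j 1)).trace) := by
    rw [hρ, smul_mul_smul_comm]
    simp only [add_mul, mul_add, ← Matrix.mul_kronecker_mul, Matrix.trace_add,
      Matrix.trace_smul, Matrix.trace_kronecker,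
      Matrix.single_mul_single_same,
      Matrix.single_mul_single_of_ne, ne_eq, not_false_eq_true,
      hij, Ne.symm hij,
      Matrix.kroneckerMap_zero_right,
      Matrix.trace_zero, mul_zero, zero_add, add_zero, mul_one,
      Matrix.trace_single_eq_same,
      Matrix.trace_single_eq_of_ne _ _ _ hij, Matrix.trace_single_eq_of_ne _ _ _ hij.symm,
      smul_eq_mul]
    ring
  rw [hadj] at hexp
  have hcomm : ((Φ (Matrix.single i j 1))ᴴ * Φ (Matrix.single i j 1)).trace =
      (Φ (Matrix.single i j 1) * (Φ (Matrix.single i j 1))ᴴ).trace :=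
    Matrix.trace_mul_comm _ _
  rw [hcomm] at hexp
  -- real parts
  have hre : ((ρ * ρ).trace).re = (1/4 : ℝ) *
      (((Φ (Matrix.single i i 1) * Φ (Matrix.single i i 1)).trace).re +
       ((Φ (Matrix.single i j 1) * (Φ (Matrix.single i j 1))ᴴ).trace).re +
       ((Φ (Matrix.single i j 1) * (Φ (Matrix.single i j 1))ᴴ).trace).re +
       ((Φ (Matrix.single j j 1) * Φ (Matrix.single j j 1)).trace).re) := by
    rw [hexp, show (1/4 : ℂ) = ((1/4 : ℝ) : ℂ) by norm_num, Complex.re_ofReal_mul]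
    simp [Complex.add_re]
  have ht1 : ((Φ (Matrix.single i i 1) * Φ (Matrix.single i i 1)).trace).re ≤ 1 :=
    trace_sq_le_one hPii (by rw [hTP]; simp)
  have ht4 : ((Φ (Matrix.single j j 1) * Φ (Matrix.single j j 1)).trace).re ≤ 1 :=
    trace_sq_le_one hPjj (by rw [hTP]; simp)
  rw [hre] at hpurity
  linarith
end

section
/- Let X be an operator with trace norm ‖X‖₁ ≤ 1 and sum of squared singular values tr(XX*) ≥ 1 − 4ε for some 0 ≤ ε < 1/4. Then the largest singular value of X is at least 1 − 4ε, and X can be written as X = (1 − 4ε)|φ⟩⟨χ| + 4εY for unit vectors φ, χ and an operator Y with ‖Y‖₁ ≤ 1. -/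
open Matrix BigOperators
open scoped ComplexOrder

set_option linter.unusedSectionVars false
set_option linter.unusedVariables false
set_option linter.unusedTactic false

section helpers

lemma trace_conj_diag {n : Type*} [Fintype n] [DecidableEq n]
    {V : Matrix n n ℂ} (hV : V ∈ Matrix.unitaryGroup n ℂ) (e : n → ℂ) :
    (V * Matrix.diagonal e * star V).trace = ∑ i, e i := by
  rw [Matrix.trace_mul_cycle, Matrix.mem_unitaryGroup_iff'.mp hV, Matrix.one_mul,
    Matrix.trace_diagonal]

lemma traceNorm_eq_of_decomp {m n : Type*} [Fintype m] [Fintype n] [DecidableEq n]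
    (W : Matrix m n ℂ) {V : Matrix n n ℂ} (hV : V ∈ Matrix.unitaryGroup n ℂ)
    (μ : n → ℝ) (hμ : ∀ i, 0 ≤ μ i)
    (h : Wᴴ * W = V * Matrix.diagonal (fun i => (μ i : ℂ)) * star V) :
    traceNorm W = ∑ i, Real.sqrt (μ i) := by
  set P := Matrix.posSemidef_conjTranspose_mul_self W with hP
  have hVV : star V * V = 1 := Matrix.mem_unitaryGroup_iff'.mp hV
  have conj_mul : ∀ A C : Matrix n n ℂ,
      (V * A * star V) * (V * C * star V) = V * (A * C) * star V := by
    intro A C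
    calc (V * A * star V) * (V * C * star V) = V * (A * (star V * V * (C * star V))) := by
          simp only [mul_assoc]
      _ = V * (A * C) * star V := by rw [hVV, one_mul]; simp only [mul_assoc]
  set B : Matrix n n ℂ := V * Matrix.diagonal (fun i => ((Real.sqrt (μ i) : ℝ) : ℂ)) * star V
    with hBdef
  have hB : B.PosSemidef := by
    apply Matrix.PosSemidef.mul_mul_conjTranspose_same
    refine Matrix.posSemidef_diagonal_iff.mpr fun i => ?_
    rw [RCLike.nonneg_iff]
    simp [Real.sqrt_nonneg]
  have hB2 : B ^ 2 = Wᴴ * W := by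
    rw [pow_two, hBdef, h, conj_mul, Matrix.diagonal_mul_diagonal]
    have : (fun i => (Real.sqrt (μ i) : ℂ) * (Real.sqrt (μ i) : ℂ)) =
        (fun i => ((μ i : ℝ) : ℂ)) := by
      funext i
      rw [← Complex.ofReal_mul, Real.mul_self_sqrt (hμ i)]
    rw [this]
  set U : Matrix n n ℂ := (P.1.eigenvectorUnitary : Matrix n n ℂ) with hUdef
  have hUU : star U * U = 1 := Matrix.mem_unitaryGroup_iff'.mp P.1.eigenvectorUnitary.2
  set B' : Matrix n n ℂ :=
    U * Matrix.diagonal (fun i => ((Real.sqrt (P.1.eigenvalues i) : ℝ) : ℂ)) * star U with hB'def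
  have hB' : B'.PosSemidef := by
    apply Matrix.PosSemidef.mul_mul_conjTranspose_same
    refine Matrix.posSemidef_diagonal_iff.mpr fun i => ?_
    rw [RCLike.nonneg_iff]
    simp [Real.sqrt_nonneg]
  have hB'2 : B' * B' = Wᴴ * W := by
    rw [show B' * B' = U * (Matrix.diagonal (fun i => ((Real.sqrt (P.1.eigenvalues i) : ℝ) : ℂ))
        * Matrix.diagonal (fun i => ((Real.sqrt (P.1.eigenvalues i) : ℝ) : ℂ))) * star U by
      simp only [hB'def, mul_assoc]; rw [← mul_assoc (star U) U, hUU, one_mul]]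
    conv_rhs => rw [P.1.spectral_theorem]
    rw [Matrix.diagonal_mul_diagonal]
    congr 3
    funext i
    simp only [Function.comp_apply]
    rw [← Complex.ofReal_mul, Real.mul_self_sqrt (P.eigenvalues_nonneg i)]
    rfl
  have hBsqrt : B = B' := by
    open scoped MatrixOrder in
    rw [← CFC.sqrt_unique (a := Wᴴ * W) (b := B) (by rw [← pow_two]; exact hB2) hB.nonneg,
      CFC.sqrt_unique (a := Wᴴ * W) (b := B') hB'2 hB'.nonneg]
  have h1 : B.trace = ((∑ i, Real.sqrt (μ i) : ℝ) : ℂ) := by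
    rw [hBdef, trace_conj_diag hV]
    push_cast; rfl
  have h2 : B'.trace = ((∑ i, Real.sqrt (P.1.eigenvalues i) : ℝ) : ℂ) := by
    rw [hB'def, trace_conj_diag P.1.eigenvectorUnitary.2]
    push_cast; rfl
  have h3 := hBsqrt ▸ h1
  rw [h2] at h3
  have h4 := congrArg Complex.re h3
  simp only [Complex.ofReal_re] at h4
  exact h4

variable {l m n p : Type*} [Fintype l] [Fintype m] [Fintype n] [Fintype p]

lemma myVecMulVec_conjT (u : m → ℂ) (v : n → ℂ) :
    (Matrix.vecMulVec u v)ᴴ = Matrix.vecMulVec (star v) (star u) := by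
  ext i j
  simp [Matrix.vecMulVec_apply, Matrix.conjTranspose_apply, mul_comm]

lemma myMul_vecMulVec (A : Matrix m n ℂ) (u : n → ℂ) (v : p → ℂ) :
    A * Matrix.vecMulVec u v = Matrix.vecMulVec (A *ᵥ u) v := by
  ext i j
  simp [Matrix.mul_apply, Matrix.vecMulVec_apply, Matrix.mulVec, dotProduct,
    Finset.sum_mul, mul_assoc]

lemma myVecMulVec_mul (u : m → ℂ) (v : n → ℂ) (A : Matrix n p ℂ) :
    Matrix.vecMulVec u v * A = Matrix.vecMulVec u (v ᵥ* A) := by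
  ext i j
  simp [Matrix.mul_apply, Matrix.vecMulVec_apply, Matrix.vecMul, dotProduct,
    Finset.mul_sum, mul_assoc]

lemma myVecMulVec_vecMulVec (u : m → ℂ) (v : n → ℂ) (w : n → ℂ) (z : p → ℂ) :
    Matrix.vecMulVec u v * Matrix.vecMulVec w z = (v ⬝ᵥ w) • Matrix.vecMulVec u z := by
  ext i j
  simp [Matrix.mul_apply, Matrix.vecMulVec_apply, dotProduct, Finset.sum_mul,
    Finset.mul_sum]
  exact Finset.sum_congr rfl fun k _ => by ring

lemma myVecMulVec_smul (c : ℂ) (u : m → ℂ) (v : n → ℂ) :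
    Matrix.vecMulVec (c • u) v = c • Matrix.vecMulVec u v := by
  ext i j
  simp [Matrix.vecMulVec_apply, mul_assoc]

lemma myVecMulVec_smul₂ (c : ℂ) (u : m → ℂ) (v : n → ℂ) :
    Matrix.vecMulVec u (c • v) = c • Matrix.vecMulVec u v := by
  ext i j
  simp [Matrix.vecMulVec_apply]
  ring

lemma myDot_self (v : n → ℂ) : star v ⬝ᵥ v = ((∑ i, ‖v i‖ ^ 2 : ℝ) : ℂ) := by
  push_cast
  simp only [dotProduct, Pi.star_apply, Complex.star_def]
  congr 1
  funext i
  rw [mul_comm, Complex.mul_conj']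

lemma myConj_single {n : Type*} [Fintype n] [DecidableEq n] (V : Matrix n n ℂ) (i₀ : n) :
    V * Matrix.diagonal (Pi.single i₀ (1:ℂ)) * star V
      = Matrix.vecMulVec (fun i => V i i₀) (star fun j => V j i₀) := by
  ext i j
  rw [Matrix.mul_apply, Matrix.vecMulVec_apply]
  rw [Finset.sum_eq_single i₀]
  · rw [Matrix.mul_diagonal, Pi.single_eq_same, mul_one, Matrix.star_apply]
    rfl
  · intro b _ hb
    rw [Matrix.mul_diagonal, Pi.single_eq_of_ne hb, mul_zero, zero_mul]
  · simp

end helpers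

/-- If ‖X‖₁ ≤ 1 and tr(XX*) ≥ 1 − 4ε with 0 ≤ ε < 1/4, then the largest singular value
of X is at least 1 − 4ε and X = (1 − 4ε)|φ⟩⟨χ| + 4εY with φ, χ unit and ‖Y‖₁ ≤ 1. -/
theorem near_rank_one_decomposition {m n : ℕ} (hm : 0 < m) (hn : 0 < n)
    (X : Matrix (Fin m) (Fin n) ℂ) (ε : ℝ) (hε0 : 0 ≤ ε) (hε : ε < 1 / 4)
    (htn : traceNorm X ≤ 1)
    (hsq : ((X * Xᴴ).trace).re ≥ 1 - 4 * ε) :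
    Real.sqrt (specMax (Xᴴ * X)) ≥ 1 - 4 * ε ∧
      ∃ (φ : Fin m → ℂ) (χ : Fin n → ℂ) (Y : Matrix (Fin m) (Fin n) ℂ),
        (∑ i, ‖φ i‖ ^ 2 = 1) ∧ (∑ i, ‖χ i‖ ^ 2 = 1) ∧ traceNorm Y ≤ 1 ∧
        X = ((1 - 4 * ε : ℝ) : ℂ) • Matrix.vecMulVec φ (star χ) +
          ((4 * ε : ℝ) : ℂ) • Y := by
  have ha0 : (0:ℝ) < 1 - 4 * ε := by linarith
  set a : ℝ := 1 - 4 * ε with hadef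
  have hH : (Xᴴ * X).IsHermitian := (Matrix.posSemidef_conjTranspose_mul_self X).1
  set lam := hH.eigenvalues with hlam
  set s : Fin n → ℝ := fun i => Real.sqrt (lam i) with hs
  have hlam0 : ∀ i, 0 ≤ lam i := (Matrix.posSemidef_conjTranspose_mul_self X).eigenvalues_nonneg
  set V : Matrix (Fin n) (Fin n) ℂ := (hH.eigenvectorUnitary : Matrix (Fin n) (Fin n) ℂ) with hVdef
  have hVmem : V ∈ Matrix.unitaryGroup (Fin n) ℂ := hH.eigenvectorUnitary.2
  have hofReal : (RCLike.ofReal ∘ lam : Fin n → ℂ) = fun i => ((lam i : ℝ) : ℂ) := rfl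
  have hspec : Xᴴ * X = V * Matrix.diagonal (fun i => ((lam i : ℝ) : ℂ)) * star V := by
    rw [← hofReal]; exact hH.spectral_theorem
  -- trace norm of X as sum of s
  have htn' : ∑ i, s i ≤ 1 := htn
  -- sum of eigenvalues
  have hsum_lam : a ≤ ∑ i, lam i := by
    have h1 : (X * Xᴴ).trace = (Xᴴ * X).trace := Matrix.trace_mul_comm X Xᴴ
    have h2 : (Xᴴ * X).trace = ((∑ i, lam i : ℝ) : ℂ) := by
      rw [hspec, trace_conj_diag hVmem]; push_cast; rfl
    rw [h1, h2] at hsq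
    rwa [Complex.ofReal_re] at hsq
  -- pick the maximal singular value
  have hne : (Finset.univ : Finset (Fin n)).Nonempty := ⟨⟨0, hn⟩, Finset.mem_univ _⟩
  obtain ⟨i₀, -, hmax⟩ := Finset.exists_max_image Finset.univ s hne
  have hsm : a ≤ s i₀ := by
    have h1 : ∑ i, lam i ≤ s i₀ * ∑ i, s i := by
      rw [Finset.mul_sum]
      refine Finset.sum_le_sum fun i _ => ?_
      have : lam i = s i * s i := (Real.mul_self_sqrt (hlam0 i)).symm
      rw [this]
      exact mul_le_mul_of_nonneg_right (hmax i (Finset.mem_univ i)) (Real.sqrt_nonneg _)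
    have h2 : s i₀ * ∑ i, s i ≤ s i₀ :=
      (mul_le_of_le_one_right (Real.sqrt_nonneg _) htn')
    linarith [hsum_lam]
  have hsm0 : 0 < s i₀ := lt_of_lt_of_le ha0 hsm
  have hlam_i₀ : lam i₀ = s i₀ * s i₀ := (Real.mul_self_sqrt (hlam0 i₀)).symm
  constructor
  · -- part 1
    have h1 : specMax (Xᴴ * X) = ⨆ i, lam i := by rw [specMax, dif_pos hH]
    have h2 : lam i₀ ≤ ⨆ i, lam i :=
      le_ciSup (Set.Finite.bddAbove (Set.finite_range lam)) i₀
    calc (1 - 4*ε : ℝ) ≤ s i₀ := hsm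
      _ ≤ Real.sqrt (specMax (Xᴴ * X)) := by rw [h1]; exact Real.sqrt_le_sqrt h2
  · -- part 2
    set χ : Fin n → ℂ := fun i => V i i₀ with hχdef
    have hχbasis : χ = ⇑(hH.eigenvectorBasis i₀) := by
      funext i; exact hH.eigenvectorUnitary_apply i i₀
    have hMχ : (Xᴴ * X) *ᵥ χ = ((lam i₀ : ℝ) : ℂ) • χ := by
      rw [hχbasis]
      have := hH.mulVec_eigenvectorBasis i₀
      rw [this]
      funext i
      simp [Complex.real_smul, hlam]
    have hχunit : ∑ i, ‖χ i‖ ^ 2 = 1 := by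
      have hnorm : ‖hH.eigenvectorBasis i₀‖ = 1 := hH.eigenvectorBasis.orthonormal.1 i₀
      rw [EuclideanSpace.norm_eq] at hnorm
      have := Real.sqrt_eq_one.mp hnorm
      rw [hχbasis]
      exact this
    have hχdot : star χ ⬝ᵥ χ = 1 := by
      rw [myDot_self, hχunit]; norm_num
    set φ : Fin m → ℂ := (((s i₀)⁻¹ : ℝ) : ℂ) • (X *ᵥ χ) with hφdef
    have hsmC : ((s i₀ : ℝ) : ℂ) ≠ 0 := by
      simp only [ne_eq, Complex.ofReal_eq_zero]
      exact ne_of_gt hsm0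
    have hXχ : X *ᵥ χ = ((s i₀ : ℝ) : ℂ) • φ := by
      rw [hφdef, smul_smul, ← Complex.ofReal_mul, mul_inv_cancel₀ (ne_of_gt hsm0)]
      simp
    have hXHφ : Xᴴ *ᵥ φ = ((s i₀ : ℝ) : ℂ) • χ := by
      rw [hφdef, Matrix.mulVec_smul, Matrix.mulVec_mulVec, hMχ, smul_smul,
        ← Complex.ofReal_mul]
      congr 2
      rw [hlam_i₀]
      field_simp
    have hφdot : star φ ⬝ᵥ φ = 1 := by
      have key : star χ ⬝ᵥ (Xᴴ *ᵥ φ) = ((s i₀ : ℝ) : ℂ) * (star φ ⬝ᵥ φ) := by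
        rw [Matrix.dotProduct_mulVec, ← Matrix.star_mulVec X χ, hXχ, star_smul,
          smul_dotProduct]
        congr 1
        simp [Complex.star_def, Complex.conj_ofReal]
      rw [hXHφ, dotProduct_smul, hχdot, smul_eq_mul, mul_one] at key
      have key2 : ((s i₀ : ℝ) : ℂ) * 1 = ((s i₀ : ℝ) : ℂ) * (star φ ⬝ᵥ φ) := by
        rw [mul_one]; exact key
      exact (mul_left_cancel₀ hsmC key2).symm
    have hφunit : ∑ i, ‖φ i‖ ^ 2 = 1 := by
      have := myDot_self φ
      rw [hφdot] at this
      exact_mod_cast this.symm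
    -- the remainder Z
    set K' : Matrix (Fin m) (Fin n) ℂ := Matrix.vecMulVec φ (star χ) with hK'def
    set K : Matrix (Fin n) (Fin n) ℂ := Matrix.vecMulVec χ (star χ) with hKdef
    set Z : Matrix (Fin m) (Fin n) ℂ := X - ((a : ℝ) : ℂ) • K' with hZdef
    set ν : Fin n → ℝ := fun i => if i = i₀ then (s i₀ - a)^2 else lam i with hνdef
    have hν0 : ∀ i, 0 ≤ ν i := by
      intro i
      rw [hνdef]
      dsimp only
      split
      · exact sq_nonneg _
      · exact hlam0 i
    have hK'conj : K'ᴴ = Matrix.vecMulVec χ (star φ) := by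
      rw [hK'def, myVecMulVec_conjT, star_star]
    have e1 : Xᴴ * K' = ((s i₀ : ℝ) : ℂ) • K := by
      rw [hK'def, myMul_vecMulVec, hXHφ, myVecMulVec_smul, hKdef]
    have e2 : Matrix.vecMulVec χ (star φ) * X = ((s i₀ : ℝ) : ℂ) • K := by
      rw [myVecMulVec_mul]
      have h5 : star φ ᵥ* X = ((s i₀ : ℝ) : ℂ) • star χ := by
        have h6 := congrArg star hXHφ
        rw [Matrix.star_mulVec, Matrix.conjTranspose_conjTranspose] at h6
        rw [h6, star_smul]
        congr 1
        simp [Complex.star_def, Complex.conj_ofReal]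
      rw [h5, myVecMulVec_smul₂, hKdef]
    have e3 : Matrix.vecMulVec χ (star φ) * K' = K := by
      rw [hK'def, myVecMulVec_vecMulVec, hφdot, one_smul, hKdef]
    have hZZ : Zᴴ * Z = Xᴴ * X
        - (((2 * a * s i₀ - a^2 : ℝ) : ℂ)) • K := by
      have hconj_a : star ((a : ℝ) : ℂ) = ((a : ℝ) : ℂ) := by
        simp [Complex.star_def, Complex.conj_ofReal]
      rw [hZdef, Matrix.conjTranspose_sub, Matrix.conjTranspose_smul, hconj_a, hK'conj]
      simp only [Matrix.sub_mul, Matrix.mul_sub, Matrix.smul_mul, Matrix.mul_smul,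
        e1, e2, e3, smul_smul]
      push_cast
      module
    have hZdecomp : Zᴴ * Z = V * Matrix.diagonal (fun i => ((ν i : ℝ) : ℂ)) * star V := by
      rw [hZZ, hspec]
      have hK : K = V * Matrix.diagonal (Pi.single i₀ (1:ℂ)) * star V := by
        rw [hKdef, myConj_single V i₀]
      rw [hK]
      rw [show ∀ (c : ℂ) (D : Matrix (Fin n) (Fin n) ℂ),
            c • (V * D * star V) = V * (c • D) * star V from
        fun c D => by rw [Matrix.mul_smul, Matrix.smul_mul]]
      rw [← Matrix.sub_mul, ← Matrix.mul_sub]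
      congr 2
      rw [← Matrix.diagonal_smul, Matrix.diagonal_sub]
      refine congrArg Matrix.diagonal (funext fun i => ?_)
      rw [hνdef]
      dsimp only [Pi.smul_apply]
      by_cases hi : i = i₀
      · subst hi
        rw [Pi.single_eq_same, if_pos rfl, smul_eq_mul, mul_one]
        rw [hlam_i₀]
        push_cast
        ring
      · rw [Pi.single_eq_of_ne hi, if_neg hi, smul_eq_mul, mul_zero, sub_zero]
    have htnZ : traceNorm Z = ∑ i, Real.sqrt (ν i) :=
      traceNorm_eq_of_decomp Z hVmem ν hν0 hZdecomp
    have hsqrtν : ∀ i, Real.sqrt (ν i) = s i + (if i = i₀ then (s i₀ - a) - s i₀ else 0) := by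
      intro i
      rw [hνdef]
      dsimp only
      by_cases hi : i = i₀
      · subst hi
        rw [if_pos rfl, if_pos rfl, Real.sqrt_sq (by linarith)]
        ring
      · rw [if_neg hi, if_neg hi, add_zero, hs]
    have hsumν : ∑ i, Real.sqrt (ν i) = (∑ i, s i) - a := by
      simp_rw [hsqrtν]
      rw [Finset.sum_add_distrib, Finset.sum_ite_eq' Finset.univ i₀]
      simp
      ring
    have htnZle : traceNorm Z ≤ 4 * ε := by
      rw [htnZ, hsumν]
      have : (1:ℝ) - a = 4 * ε := by rw [hadef]; ring
      linarith
    by_cases hεz : ε = 0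
    · -- epsilon = 0 : Z must vanish
      subst hεz
      have h40 : traceNorm Z ≤ 0 := by simpa using htnZle
      have hsum0 : ∑ i, Real.sqrt (ν i) = 0 := by
        have h1 : 0 ≤ ∑ i, Real.sqrt (ν i) :=
          Finset.sum_nonneg fun i _ => Real.sqrt_nonneg _
        rw [htnZ] at h40
        linarith
      have hν_zero : ∀ i, ν i = 0 := by
        intro i
        have := (Finset.sum_eq_zero_iff_of_nonneg
          (fun i _ => Real.sqrt_nonneg (ν i))).mp hsum0 i (Finset.mem_univ i)
        exact (Real.sqrt_eq_zero (hν0 i)).mp this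
      have hZZ0 : Zᴴ * Z = 0 := by
        rw [hZdecomp]
        have : (fun i => ((ν i : ℝ) : ℂ)) = fun _ => (0:ℂ) := by
          funext i; rw [hν_zero i]; simp
        rw [this]
        simp [Matrix.diagonal_zero]
      have hZ0 : Z = 0 := Matrix.conjTranspose_mul_self_eq_zero.mp hZZ0
      refine ⟨φ, χ, 0, hφunit, hχunit, ?_, ?_⟩
      · have h0 : traceNorm (0 : Matrix (Fin m) (Fin n) ℂ) = ∑ i : Fin n, Real.sqrt 0 := by
          apply traceNorm_eq_of_decomp (0 : Matrix (Fin m) (Fin n) ℂ)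
            (Submonoid.one_mem _) (fun _ => (0:ℝ)) (fun _ => le_refl 0)
          simp
        rw [h0]
        simp
      · rw [hZdef] at hZ0
        have : X = ((a : ℝ) : ℂ) • K' := by
          have := sub_eq_zero.mp hZ0
          exact this
        rw [this, hK'def]
        norm_num
    · -- epsilon > 0
      have hε' : 0 < ε := lt_of_le_of_ne hε0 (Ne.symm hεz)
      have h4e : (0:ℝ) < 4 * ε := by linarith
      set c : ℝ := (4 * ε)⁻¹ with hcdef
      have hc0 : 0 < c := inv_pos.mpr h4e
      set Y : Matrix (Fin m) (Fin n) ℂ := ((c : ℝ) : ℂ) • Z with hYdef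
      refine ⟨φ, χ, Y, hφunit, hχunit, ?_, ?_⟩
      · -- trace norm of Y
        have hYdecomp : Yᴴ * Y
            = V * Matrix.diagonal (fun i => ((c^2 * ν i : ℝ) : ℂ)) * star V := by
          rw [hYdef, Matrix.conjTranspose_smul, Matrix.smul_mul, Matrix.mul_smul,
            smul_smul, hZdecomp]
          have hcc : star ((c : ℝ) : ℂ) * ((c : ℝ) : ℂ) = ((c^2 : ℝ) : ℂ) := by
            simp [Complex.star_def, Complex.conj_ofReal]
            push_cast
            ring
          rw [hcc]
          rw [show ∀ (d : ℂ) (D : Matrix (Fin n) (Fin n) ℂ),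
                d • (V * D * star V) = V * (d • D) * star V from
            fun d D => by rw [Matrix.mul_smul, Matrix.smul_mul]]
          congr 2
          rw [← Matrix.diagonal_smul]
          refine congrArg Matrix.diagonal (funext fun i => ?_)
          dsimp only [Pi.smul_apply]
          rw [smul_eq_mul]
          push_cast
          ring
        have htnY : traceNorm Y = ∑ i, Real.sqrt (c^2 * ν i) :=
          traceNorm_eq_of_decomp Y hVmem _
            (fun i => mul_nonneg (sq_nonneg c) (hν0 i)) hYdecomp
        rw [htnY]
        have : ∀ i, Real.sqrt (c^2 * ν i) = c * Real.sqrt (ν i) := by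
          intro i
          rw [Real.sqrt_mul (sq_nonneg c), Real.sqrt_sq (le_of_lt hc0)]
        simp_rw [this]
        rw [← Finset.mul_sum, ← hsumν] at *
        calc c * (∑ i, Real.sqrt (ν i)) ≤ c * (4 * ε) := by
              rw [← htnZ]
              exact mul_le_mul_of_nonneg_left htnZle (le_of_lt hc0)
          _ = 1 := by rw [hcdef]; field_simp
      · -- the decomposition
        have h4ec : ((4 * ε : ℝ) : ℂ) • Y = Z := by
          rw [hYdef, smul_smul, ← Complex.ofReal_mul, hcdef,
            mul_inv_cancel₀ (ne_of_gt h4e)]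
          simp
        rw [h4ec, hZdef, hK'def]
        abel
end
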